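/- arXiv:1406.1148 — 4 statements merged into one kernel-verified Lean document; each statement's English description precedes it below -/
import Mathlib

section
/- Let ψ : ℕ → ℕ be positive with limsup_{n→∞} (log ψ(n))/n = log B, 1 < B < ∞. Then liminf_{n→∞} (ψ(1)+⋯+ψ(n))/ψ(n) < ∞. -/
open Filter

theorem stmt3 (ψ : ℕ → ℕ) (hψ : ∀ n, 1 ≤ ψ n) (B : ℝ) (hB : 1 < B)
    (h : limsup (fun n => Real.log (ψ n) / n) atTop = Real.log B) :
    liminf (fun n => (((∑ k ∈ Finset.Icc 1 n, (ψ k : ℝ)) / (ψ n : ℝ) : ℝ) : EReal)) atTop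
      < ⊤ := by
  by_contra h'
  have htop : liminf (fun n => (((∑ k ∈ Finset.Icc 1 n, (ψ k : ℝ)) / (ψ n : ℝ) : ℝ) : EReal))
      atTop = ⊤ := top_le_iff.mp (not_lt.mp h')
  set S : ℕ → ℝ := fun n => ∑ k ∈ Finset.Icc 1 n, (ψ k : ℝ) with hSdef
  have hψpos : ∀ n, (0:ℝ) < ψ n := fun n => by exact_mod_cast hψ n
  have hSnonneg : ∀ n, 0 ≤ S n := fun n =>
    Finset.sum_nonneg fun k _ => (hψpos k).le
  have hψleS : ∀ n, 1 ≤ n → (ψ n : ℝ) ≤ S n := by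
    intro n hn
    exact Finset.single_le_sum (f := fun k => (ψ k : ℝ)) (fun k _ => (hψpos k).le)
      (Finset.mem_Icc.mpr ⟨hn, le_refl n⟩)
  have hB0 : (0:ℝ) < B - 1 := by linarith
  set M : ℝ := B / (B - 1) + 1 with hM
  have hM1 : 1 < M := by
    have h0 : 0 < B / (B - 1) := by positivity
    rw [hM]; linarith
  set r : ℝ := M / (M - 1) with hr
  have hr0 : 0 < r := by rw [hr]; exact div_pos (by linarith) (by linarith)
  have hr1 : 1 < r := by
    rw [hr, lt_div_iff₀ (by linarith)]; linarith
  have hrB : r < B := by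
    rw [hr, div_lt_iff₀ (by linarith)]
    have hBne : B - 1 ≠ 0 := ne_of_gt hB0
    rw [hM]
    field_simp
    nlinarith [pow_pos hB0 3]
  -- eventually M < S n / ψ n
  have hev : ∀ᶠ n in atTop, (M : ℝ) < S n / ψ n := by
    have hlt : (M : EReal) < liminf
        (fun n => (((∑ k ∈ Finset.Icc 1 n, (ψ k : ℝ)) / (ψ n : ℝ) : ℝ) : EReal)) atTop := by
      rw [htop]; exact EReal.coe_lt_top M
    have := Filter.eventually_lt_of_lt_liminf hlt
    filter_upwards [this] with n hn
    exact EReal.coe_lt_coe_iff.mp hn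
  obtain ⟨N, hN⟩ := eventually_atTop.mp hev
  set N' : ℕ := max N 1 with hN'
  have hN'1 : 1 ≤ N' := le_max_right N 1
  have hstep : ∀ n : ℕ, N' ≤ n + 1 → S (n + 1) ≤ r * S n := by
    intro n hn
    have h1 : M < S (n + 1) / ψ (n + 1) := hN (n + 1) (le_trans (le_max_left N 1) hn)
    have h2 : M * (ψ (n + 1) : ℝ) < S (n + 1) :=
      (lt_div_iff₀ (hψpos (n + 1))).mp h1
    have h3 : S (n + 1) = S n + (ψ (n + 1) : ℝ) := by
      rw [hSdef]
      exact Finset.sum_Icc_succ_top (by omega) _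
    have key : (M - 1) * (ψ (n + 1) : ℝ) < S n := by nlinarith
    rw [h3, hr, div_mul_eq_mul_div, le_div_iff₀ (by linarith)]
    nlinarith [hψpos (n + 1)]
  have hind : ∀ m : ℕ, S (N' + m) ≤ S N' * r ^ m := by
    intro m
    induction m with
    | zero => simp
    | succ m ih =>
        have h1 : S (N' + m + 1) ≤ r * S (N' + m) := hstep (N' + m) (by omega)
        calc S (N' + (m + 1)) = S (N' + m + 1) := by ring_nf
          _ ≤ r * S (N' + m) := h1
          _ ≤ r * (S N' * r ^ m) := by
              exact mul_le_mul_of_nonneg_left ih hr0.le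
          _ = S N' * r ^ (m + 1) := by ring
  set C : ℝ := S N' / r ^ N' with hC
  have hSN'pos : 0 < S N' := lt_of_lt_of_le (hψpos N') (hψleS N' hN'1)
  have hCpos : 0 < C := by positivity
  have hbound : ∀ n, N' ≤ n → (ψ n : ℝ) ≤ C * r ^ n := by
    intro n hn
    have h1 : S n ≤ S N' * r ^ (n - N') := by
      have := hind (n - N')
      rwa [Nat.add_sub_cancel' hn] at this
    have h2 : S N' * r ^ (n - N') = C * r ^ n := by
      rw [hC, div_mul_eq_mul_div, eq_div_iff (by positivity), mul_assoc, ← pow_add]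
      congr 2
      omega
    calc (ψ n : ℝ) ≤ S n := hψleS n (le_trans hN'1 hn)
      _ ≤ S N' * r ^ (n - N') := h1
      _ = C * r ^ n := h2
  have hlogbound : ∀ᶠ n in atTop, Real.log (ψ n) / n ≤ Real.log C / n + Real.log r := by
    filter_upwards [eventually_ge_atTop N'] with n hn
    have hnpos : (0:ℝ) < n := by
      have : 1 ≤ n := le_trans hN'1 hn
      exact_mod_cast this
    have h1 : Real.log (ψ n) ≤ Real.log (C * r ^ n) :=
      Real.log_le_log (hψpos n) (hbound n hn)
    have h2 : Real.log (C * r ^ n) = Real.log C + n * Real.log r := by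
      rw [Real.log_mul (ne_of_gt hCpos) (by positivity), Real.log_pow]
    calc Real.log (ψ n) / n ≤ (Real.log C + n * Real.log r) / n := by
          rw [← h2]; gcongr
      _ = Real.log C / n + Real.log r := by
          rw [add_div, mul_div_cancel_left₀ _ hnpos.ne']
  have hg : Tendsto (fun n : ℕ => Real.log C / n + Real.log r) atTop (nhds (Real.log r)) := by
    have := (tendsto_const_div_atTop_nhds_zero_nat (Real.log C)).add_const (Real.log r)
    simpa using this
  have hbdd : IsBoundedUnder (· ≥ ·) atTop (fun n : ℕ => Real.log (ψ n) / n) := by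
    apply Filter.isBoundedUnder_of
    refine ⟨0, fun n => ?_⟩
    have : 0 ≤ Real.log (ψ n) := Real.log_nonneg (by exact_mod_cast hψ n)
    positivity
  have hcobdd := hbdd.isCoboundedUnder_le
  have hle : limsup (fun n : ℕ => Real.log (ψ n) / n) atTop ≤ Real.log r := by
    have h1 := Filter.limsup_le_limsup hlogbound hcobdd hg.isBoundedUnder_le
    rwa [hg.limsup_eq] at h1
  rw [h] at hle
  have : Real.log r < Real.log B := Real.log_lt_log hr0 hrB
  linarith
end

section
/- Let ψ : ℕ → ℕ satisfy ψ(n)/n → ∞, and suppose x ∈ [0,1) is irrational with limsup_{n→∞} (log a₁(x)+⋯+log aₙ(x))/ψ(n) = 1. Then for every δ ∈ (0,1) there exist infinitely many indices i such that log a_i(x) ≥ (1−δ)·ψ(n)/(2n) for some n ≥ i with log a₁(x)+⋯+log aₙ(x) ≥ (1−δ)ψ(n). -/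
open Filter MeasureTheory Set
open scoped ENNReal

noncomputable def gaussMap (x : ℝ) : ℝ := Int.fract (1 / x)

/-- The `n`-th partial quotient of the continued fraction expansion of `x` (for `n ≥ 1`). -/
noncomputable def cfA (n : ℕ) (x : ℝ) : ℕ := ⌊1 / (gaussMap^[n - 1] x)⌋₊

lemma gauss_iter (x : ℝ) (hx : x ∈ Set.Ioo (0:ℝ) 1) (hirr : Irrational x) (k : ℕ) :
    gaussMap^[k] x ∈ Set.Ioo (0:ℝ) 1 ∧ Irrational (gaussMap^[k] x) := by
  induction k with
  | zero => exact ⟨hx, hirr⟩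
  | succ k ih =>
    obtain ⟨hy, hyi⟩ := ih
    rw [Function.iterate_succ_apply']
    set y := gaussMap^[k] x
    have h1 : Irrational (1 / y) := by
      rw [one_div]; exact hyi.inv
    have h2 : Irrational (gaussMap y) := by
      unfold gaussMap
      rw [Int.fract]
      exact h1.sub_intCast _
    refine ⟨⟨lt_of_le_of_ne (Int.fract_nonneg _) fun heq => h2 ?_, Int.fract_lt_one _⟩, h2⟩
    exact ⟨0, by rw [Rat.cast_zero, heq]⟩

lemma cfA_one_le (x : ℝ) (hx : x ∈ Set.Ioo (0:ℝ) 1) (hirr : Irrational x) (j : ℕ) :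
    1 ≤ cfA j x := by
  obtain ⟨⟨h0, h1⟩, _⟩ := gauss_iter x hx hirr (j - 1)
  have : (1:ℝ) ≤ 1 / (gaussMap^[j-1] x) := by
    exact one_le_one_div h0 h1.le
  exact Nat.le_floor (by exact_mod_cast this)

theorem stmt5 (ψ : ℕ → ℕ) (hψ : Tendsto (fun n => (ψ n : ℝ) / n) atTop atTop)
    (x : ℝ) (hx : x ∈ Set.Ico (0 : ℝ) 1) (hirr : Irrational x)
    (h : limsup (fun n => (∑ j ∈ Finset.Icc 1 n, Real.log (cfA j x)) / (ψ n : ℝ)) atTop = 1)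
    (δ : ℝ) (hδ : δ ∈ Set.Ioo (0 : ℝ) 1) :
    ∀ N : ℕ, ∃ i ≥ N, ∃ n ≥ i,
      Real.log (cfA i x) ≥ (1 - δ) * ψ n / (2 * n) ∧
        (∑ j ∈ Finset.Icc 1 n, Real.log (cfA j x)) ≥ (1 - δ) * ψ n := by
  intro N
  have hx0 : x ∈ Set.Ioo (0:ℝ) 1 := by
    refine ⟨lt_of_le_of_ne hx.1 ?_, hx.2⟩
    intro h0; exact hirr.ne_int 0 (by simp [← h0])
  set S : ℕ → ℝ := fun n => ∑ j ∈ Finset.Icc 1 n, Real.log (cfA j x) with hS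
  have hlog : ∀ j, 0 ≤ Real.log (cfA j x) := fun j =>
    Real.log_nonneg (by exact_mod_cast cfA_one_le x hx0 hirr j)
  have hSnn : ∀ n, 0 ≤ S n := fun n => Finset.sum_nonneg fun j _ => hlog j
  -- ψ tends to infinity
  have hψ1 : ∀ᶠ n : ℕ in atTop, (n : ℝ) ≤ (ψ n : ℝ) := by
    filter_upwards [hψ.eventually_ge_atTop 1, eventually_ge_atTop 1] with n h1 hn
    have hn' : (0:ℝ) < n := by exact_mod_cast hn
    calc (n:ℝ) = 1 * n := (one_mul _).symm
    _ ≤ (ψ n / n) * n := by apply mul_le_mul_of_nonneg_right h1 hn'.le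
    _ = ψ n := by field_simp
  have hψtop : Tendsto (fun n => (ψ n : ℝ)) atTop atTop :=
    tendsto_atTop_mono' _ hψ1 tendsto_natCast_atTop_atTop
  -- frequently S n / ψ n > 1 - δ
  have hcob : IsCoboundedUnder (· ≤ ·) atTop (fun n => S n / (ψ n : ℝ)) := by
    apply IsCoboundedUnder.of_frequently_ge (a := 0)
    apply Eventually.frequently
    filter_upwards with n
    exact div_nonneg (hSnn n) (by positivity)
  have hfreq : ∃ᶠ n in atTop, 1 - δ < S n / (ψ n : ℝ) := by
    apply frequently_lt_of_lt_limsup hcob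
    rw [h]; linarith [hδ.1]
  -- combine with eventual conditions
  have hev : ∀ᶠ n in atTop, (1:ℝ) ≤ (ψ n : ℝ) ∧ S N ≤ (1 - δ) * ψ n / 2 ∧ N + 1 ≤ n := by
    have h2 : ∀ᶠ n in atTop, 2 * S N / (1 - δ) ≤ (ψ n : ℝ) :=
      hψtop.eventually_ge_atTop _
    filter_upwards [hψtop.eventually_ge_atTop 1, h2, eventually_ge_atTop (N+1)] with n ha hb hc
    refine ⟨ha, ?_, hc⟩
    rw [div_le_iff₀ (by linarith [hδ.2] : (0:ℝ) < 1 - δ)] at hb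
    linarith
  obtain ⟨n, hlt, hψn1, hSN, hNn⟩ := (hfreq.and_eventually hev).exists
  have hδ1 : (0:ℝ) < 1 - δ := by linarith [hδ.2]
  have hψpos : (0:ℝ) < ψ n := by linarith
  have hn1 : 1 ≤ n := le_trans (Nat.le_add_left 1 N) hNn
  have hnpos : (0:ℝ) < n := by exact_mod_cast hn1
  have hSn : (1 - δ) * ψ n ≤ S n := by
    rw [lt_div_iff₀ hψpos] at hlt
    linarith
  -- sum over Ioc N n
  have hsplit : S N + ∑ j ∈ Finset.Ioc N n, Real.log (cfA j x) = S n := by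
    have hIoc : ∀ m : ℕ, Finset.Icc 1 m = Finset.Ioc 0 m := fun m => Finset.Icc_add_one_left_eq_Ioc 0 m
    have h2 := Finset.sum_Ioc_consecutive (fun j => Real.log (cfA j x))
      (Nat.zero_le N) (le_trans (Nat.le_succ N) hNn)
    rw [hS]
    simp only [hIoc]
    exact h2
  have htail : (1 - δ) * ψ n / 2 ≤ ∑ j ∈ Finset.Ioc N n, Real.log (cfA j x) := by
    have : ∑ j ∈ Finset.Ioc N n, Real.log (cfA j x) = S n - S N := by linarith
    rw [this]
    have : (1 - δ) * ψ n / 2 + S N ≤ S n := by linarith [hSn, hSN]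
    linarith
  -- find large term
  by_contra hcon
  push_neg at hcon
  have hall : ∀ i ∈ Finset.Ioc N n, Real.log (cfA i x) < (1 - δ) * ψ n / (2 * n) := by
    intro i hi
    rw [Finset.mem_Ioc] at hi
    by_contra hge
    push_neg at hge
    exact absurd (hcon i (le_of_lt hi.1) n hi.2 hge) (not_lt.2 hSn)
  have hne : (Finset.Ioc N n).Nonempty := ⟨n, Finset.mem_Ioc.2 ⟨hNn, le_refl n⟩⟩
  have hsum_lt : ∑ j ∈ Finset.Ioc N n, Real.log (cfA j x)
      < (Finset.Ioc N n).card * ((1 - δ) * ψ n / (2 * n)) := by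
    calc ∑ j ∈ Finset.Ioc N n, Real.log (cfA j x)
        < ∑ _j ∈ Finset.Ioc N n, ((1 - δ) * ψ n / (2 * n)) :=
          Finset.sum_lt_sum_of_nonempty hne hall
      _ = (Finset.Ioc N n).card * ((1 - δ) * ψ n / (2 * n)) := by
          rw [Finset.sum_const, nsmul_eq_mul]
  have hcard : ((Finset.Ioc N n).card : ℝ) ≤ n := by
    rw [Nat.card_Ioc]; exact_mod_cast Nat.sub_le n N
  have hcpos : 0 < (1 - δ) * ψ n / (2 * n) := by positivity
  have : ((Finset.Ioc N n).card : ℝ) * ((1 - δ) * ψ n / (2 * n))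
      ≤ n * ((1 - δ) * ψ n / (2 * n)) := mul_le_mul_of_nonneg_right hcard hcpos.le
  have hfin : (n:ℝ) * ((1 - δ) * ψ n / (2 * n)) = (1 - δ) * ψ n / 2 := by
    field_simp
  linarith
end

section
/- Let ψ : ℕ → ℕ with ψ(n)/n → ∞ and liminf_{n→∞} (log ψ(n))/n = log b where 1 < b < ∞. Then the set of x ∈ [0,1) with limsup_{n→∞} (Σ_{j=1}^n log a_j(x))/ψ(n) = 1 is contained, for every ε ∈ (0, (b−1)/2), in the set of x such that a_i(x) > e^{(b−2ε)^i} for infinitely many i. -/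
open Filter MeasureTheory Set
open scoped ENNReal

lemma log_nat_nonneg (n : ℕ) : 0 ≤ Real.log n := by
  rcases Nat.eq_zero_or_pos n with h | h
  · simp [h]
  · exact Real.log_nonneg (by exact_mod_cast h)

theorem stmt6 (ψ : ℕ → ℕ) (hψ : Tendsto (fun n => (ψ n : ℝ) / n) atTop atTop)
    (b : ℝ) (hb : 1 < b)
    (hliminf : liminf (fun n => Real.log (ψ n) / n) atTop = Real.log b)
    (ε : ℝ) (hε : ε ∈ Set.Ioo 0 ((b - 1) / 2)) :
    {x ∈ Set.Ico (0 : ℝ) 1 |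
        limsup (fun n => (∑ j ∈ Finset.Icc 1 n, Real.log (cfA j x)) / (ψ n : ℝ)) atTop = 1} ⊆
      {x : ℝ | ∀ N : ℕ, ∃ i ≥ N, (cfA i x : ℝ) > Real.exp ((b - 2 * ε) ^ i)} := by
  obtain ⟨hε0, hε1⟩ := hε
  intro x hx
  obtain ⟨hx0, hlim⟩ := hx
  simp only [Set.mem_setOf_eq]
  by_contra hcon
  push_neg at hcon
  obtain ⟨N, hN⟩ := hcon
  set B := b - 2 * ε with hBdef
  have hB1 : 1 < B := by simp only [hBdef]; linarith
  have hB0 : 0 < B := by linarith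
  set S : ℕ → ℝ := fun n => ∑ j ∈ Finset.Icc 1 n, Real.log (cfA j x) with hSdef
  have hSnonneg : ∀ n, 0 ≤ S n := fun n =>
    Finset.sum_nonneg fun j _ => log_nat_nonneg _
  set K : ℝ := (∑ i ∈ Finset.range N, Real.log (cfA i x)) + 1 with hKdef
  have hK1 : 1 ≤ K := by
    have : 0 ≤ ∑ i ∈ Finset.range N, Real.log (cfA i x) :=
      Finset.sum_nonneg fun j _ => log_nat_nonneg _
    simp only [hKdef]; linarith
  have hbound : ∀ i, Real.log (cfA i x) ≤ K * B ^ i := by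
    intro i
    have hBi : (1:ℝ) ≤ B ^ i := one_le_pow₀ hB1.le
    rcases lt_or_ge i N with h | h
    · have h1 : Real.log (cfA i x) ≤ ∑ j ∈ Finset.range N, Real.log (cfA j x) :=
        Finset.single_le_sum (f := fun j => Real.log (cfA j x))
          (fun j _ => log_nat_nonneg _) (Finset.mem_range.mpr h)
      nlinarith [hK1]
    · have hle := hN i h
      have h1 : Real.log (cfA i x) ≤ B ^ i := by
        rcases Nat.eq_zero_or_pos (cfA i x) with h0 | h0
        · rw [h0]; simp only [Nat.cast_zero, Real.log_zero]; positivity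
        · calc Real.log (cfA i x) ≤ Real.log (Real.exp (B ^ i)) :=
                Real.log_le_log (by exact_mod_cast h0) hle
            _ = B ^ i := Real.log_exp _
      nlinarith [hK1, pow_pos hB0 i]
  set D : ℝ := K * B / (B - 1) with hDdef
  have hD0 : 0 < D := div_pos (by nlinarith) (by linarith)
  have hSB : ∀ n, S n ≤ D * B ^ n := by
    intro n
    have h1 : S n ≤ ∑ j ∈ Finset.Icc 1 n, K * B ^ j :=
      Finset.sum_le_sum fun j _ => hbound j
    have h2 : ∑ j ∈ Finset.Icc 1 n, K * B ^ j = K * ∑ j ∈ Finset.Icc 1 n, B ^ j :=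
      (Finset.mul_sum _ _ _).symm
    have h3 : ∑ j ∈ Finset.Icc 1 n, B ^ j ≤ ∑ j ∈ Finset.range (n+1), B ^ j := by
      apply Finset.sum_le_sum_of_subset_of_nonneg
      · intro j hj
        simp only [Finset.mem_Icc] at hj
        simp only [Finset.mem_range]
        omega
      · exact fun j _ _ => (pow_pos hB0 j).le
    have h4 : ∑ j ∈ Finset.range (n+1), B ^ j = (B ^ (n+1) - 1) / (B - 1) :=
      geom_sum_eq (ne_of_gt hB1) _
    have h5 : (B ^ (n+1) - 1) / (B - 1) ≤ B ^ (n+1) / (B - 1) :=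
      (div_le_div_iff_of_pos_right (by linarith)).mpr (by linarith)
    have h6 : K * (B ^ (n+1) / (B - 1)) = D * B ^ n := by
      simp only [hDdef]
      field_simp
      ring
    have hK0 : (0:ℝ) ≤ K := by linarith
    calc S n ≤ K * ∑ j ∈ Finset.Icc 1 n, B ^ j := by rw [← h2]; exact h1
      _ ≤ K * ∑ j ∈ Finset.range (n+1), B ^ j := mul_le_mul_of_nonneg_left h3 hK0
      _ = K * ((B ^ (n+1) - 1) / (B - 1)) := by rw [h4]
      _ ≤ K * (B ^ (n+1) / (B - 1)) := mul_le_mul_of_nonneg_left h5 hK0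
      _ = D * B ^ n := h6
  have hcobdd : IsCoboundedUnder (· ≤ ·) atTop (fun n => S n / (ψ n : ℝ)) := by
    apply Filter.IsBoundedUnder.isCoboundedUnder_le
    exact isBoundedUnder_of ⟨0, fun n => by
      have := hSnonneg n
      positivity⟩
  have hfreq : ∃ᶠ n in atTop, (1:ℝ)/2 < S n / (ψ n : ℝ) :=
    Filter.frequently_lt_of_lt_limsup hcobdd (by rw [hlim]; norm_num)
  have hev1 : ∀ᶠ n in atTop, (1:ℝ) ≤ (ψ n : ℝ) := by
    filter_upwards [hψ.eventually_ge_atTop 1, eventually_ge_atTop 1] with n h1 h2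
    have hn : (1:ℝ) ≤ (n:ℝ) := by exact_mod_cast h2
    have := (le_div_iff₀ (by linarith)).mp h1
    linarith
  have hlogbound : Real.log B < Real.log b :=
    Real.log_lt_log hB0 (by simp only [hBdef]; linarith)
  have key : ∀ δ : ℝ, 0 < δ → Real.log b ≤ Real.log B + δ := by
    intro δ hδ
    rw [← hliminf]
    obtain ⟨n₀, hn₀⟩ := exists_nat_ge (Real.log (2 * D) / δ)
    apply Filter.liminf_le_of_frequently_le ?_
      (isBoundedUnder_of ⟨0, fun n => div_nonneg (log_nat_nonneg _) (Nat.cast_nonneg n)⟩)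
    have hev : ∀ᶠ n in atTop, ((1:ℝ) ≤ (ψ n : ℝ) ∧ n₀ ≤ n ∧ 1 ≤ n) := by
      filter_upwards [hev1, eventually_ge_atTop n₀, eventually_ge_atTop 1] with n h1 h2 h3
      exact ⟨h1, h2, h3⟩
    refine (hfreq.and_eventually hev).mono ?_
    rintro n ⟨hhalf, hψ1, hn₀n, hn1⟩
    have hψpos : (0:ℝ) < (ψ n : ℝ) := by linarith
    have hS2 : (ψ n : ℝ) < 2 * S n := by
      have := (lt_div_iff₀ hψpos).mp hhalf
      linarith
    have hchain : (ψ n : ℝ) ≤ 2 * D * B ^ n := by nlinarith [hSB n]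
    have h2D : (0:ℝ) < 2 * D := by linarith
    have hlog1 : Real.log (ψ n) ≤ Real.log (2 * D) + n * Real.log B := by
      calc Real.log (ψ n) ≤ Real.log (2 * D * B ^ n) :=
            Real.log_le_log hψpos hchain
        _ = Real.log (2 * D) + Real.log (B ^ n) :=
            Real.log_mul (ne_of_gt h2D) (pow_ne_zero _ (ne_of_gt hB0))
        _ = Real.log (2 * D) + n * Real.log B := by rw [Real.log_pow]
    have hnpos : (0:ℝ) < (n:ℝ) := by
      have : (1:ℝ) ≤ (n:ℝ) := by exact_mod_cast hn1
      linarith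
    have hlog2D : Real.log (2 * D) ≤ n * δ := by
      have ha : Real.log (2 * D) ≤ n₀ * δ := by
        have := (div_le_iff₀ hδ).mp hn₀
        linarith
      have hb' : (n₀:ℝ) ≤ n := by exact_mod_cast hn₀n
      nlinarith
    rw [div_le_iff₀ hnpos]
    have hring : (Real.log B + δ) * (n:ℝ) = (n:ℝ) * Real.log B + (n:ℝ) * δ := by ring
    linarith [hlog1, hlog2D]
  have := key ((Real.log b - Real.log B)/2) (by linarith)
  linarith
end

section
/- With ψ, B, ε, A_i as above (A_i = max_{n≥i} exp{ψ(n)(B+ε)^{i−n}}, 0 < ε < B−1), the quantity Z := liminf_{n→∞} (Σ_{i=1}^n log A_i)/ψ(n) satisfies 1 ≤ Z < ∞. -/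
open Filter

-- auxiliary: if ψ is eventually bounded by C * θ^n with 1 < θ < B, this contradicts
-- limsup (log ψ n / n) = log B
lemma aux_limsup_contra (ψ : ℕ → ℕ) (hψ : ∀ n, 1 ≤ ψ n) (B θ C : ℝ)
    (hθ1 : 1 < θ) (hθB : θ < B)
    (h : limsup (fun n => Real.log (ψ n) / n) atTop = Real.log B)
    (hb : ∀ᶠ n : ℕ in atTop, (ψ n : ℝ) ≤ C * θ ^ n) : False := by
  have hθ0 : (0:ℝ) < θ := lt_trans one_pos hθ1
  obtain ⟨N, hN⟩ := eventually_atTop.1 hb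
  have hψ1 : ∀ n, (1:ℝ) ≤ (ψ n : ℝ) := fun n => by exact_mod_cast hψ n
  have hC : 0 < C := by
    have h1 := hN N le_rfl
    by_contra hc
    push_neg at hc
    have : C * θ ^ N ≤ 0 := mul_nonpos_of_nonpos_of_nonneg hc (pow_nonneg hθ0.le N)
    linarith [hψ1 N]
  have key : ∀ η : ℝ, 0 < η → Real.log B ≤ Real.log θ + η := by
    intro η hη
    have h0 : Tendsto (fun n : ℕ => Real.log C / n) atTop (nhds 0) :=
      tendsto_const_div_atTop_nhds_zero_nat _
    have h1 : ∀ᶠ n : ℕ in atTop, Real.log C / n ≤ η := h0.eventually_le_const hη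
    have h2 : ∀ᶠ n : ℕ in atTop, Real.log (ψ n) / n ≤ Real.log θ + η := by
      filter_upwards [h1, eventually_ge_atTop (max N 1)] with n hn1 hn2
      have hnN : N ≤ n := le_trans (le_max_left _ _) hn2
      have hn1' : 1 ≤ n := le_trans (le_max_right _ _) hn2
      have hnpos : (0:ℝ) < n := by exact_mod_cast hn1'
      have hψpos : (0:ℝ) < (ψ n : ℝ) := lt_of_lt_of_le one_pos (hψ1 n)
      have hlog : Real.log (ψ n) ≤ Real.log C + n * Real.log θ := by
        calc Real.log (ψ n) ≤ Real.log (C * θ ^ n) := Real.log_le_log hψpos (hN n hnN)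
          _ = Real.log C + n * Real.log θ := by
              rw [Real.log_mul hC.ne' (pow_pos hθ0 n).ne', Real.log_pow]
      calc Real.log (ψ n) / n ≤ (Real.log C + n * Real.log θ) / n := by gcongr
        _ = Real.log C / n + Real.log θ := by
            field_simp
        _ ≤ η + Real.log θ := by linarith
        _ = Real.log θ + η := by ring
    have hcb : IsCoboundedUnder (· ≤ ·) atTop (fun n : ℕ => Real.log (ψ n) / n) := by
      apply Filter.isCoboundedUnder_le_of_eventually_le (l := atTop) (x := 0)
      filter_upwards with n
      exact div_nonneg (Real.log_nonneg (hψ1 n)) (Nat.cast_nonneg n)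
    have := Filter.limsup_le_of_le hcb h2
    rwa [h] at this
  have hle : Real.log B ≤ Real.log θ := le_of_forall_pos_le_add key
  have : Real.log θ < Real.log B := Real.log_lt_log hθ0 hθB
  linarith

theorem stmt15 (ψ : ℕ → ℕ) (hψ : ∀ n, 1 ≤ ψ n)
    (hψ' : Tendsto (fun n => (ψ n : ℝ) / n) atTop atTop)
    (B : ℝ) (hB : 1 < B)
    (h : limsup (fun n => Real.log (ψ n) / n) atTop = Real.log B)
    (ε : ℝ) (hε : 0 < ε) (hε' : ε < B - 1)
    (A : ℕ → ℝ)
    (hA : ∀ i, IsGreatest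
      {y | ∃ n ≥ i, y = Real.exp ((ψ n : ℝ) * (B + ε) ^ ((i : ℤ) - n))} (A i)) :
    1 ≤ liminf (fun n => (((∑ i ∈ Finset.Icc 1 n, Real.log (A i)) / (ψ n : ℝ) : ℝ) : EReal))
        atTop ∧
      liminf (fun n => (((∑ i ∈ Finset.Icc 1 n, Real.log (A i)) / (ψ n : ℝ) : ℝ) : EReal))
        atTop < ⊤ := by
  classical
  set r : ℝ := B + ε with hr_def
  have hB0 : (0:ℝ) < B := lt_trans one_pos hB
  have hr1 : 1 < r := by rw [hr_def]; linarith
  have hr0 : (0:ℝ) < r := lt_trans one_pos hr1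
  have hψ1 : ∀ n, (1:ℝ) ≤ (ψ n : ℝ) := fun n => by exact_mod_cast hψ n
  have hψ0 : ∀ n, (0:ℝ) < (ψ n : ℝ) := fun n => lt_of_lt_of_le one_pos (hψ1 n)
  set L : ℕ → ℝ := fun i => Real.log (A i) with hL_def
  -- F1 : lower bounds for L
  have F1 : ∀ i m : ℕ, i ≤ m → (ψ m : ℝ) * r ^ ((i:ℤ) - m) ≤ L i := by
    intro i m him
    have hmem : Real.exp ((ψ m : ℝ) * r ^ ((i:ℤ) - m)) ∈
        {y | ∃ n ≥ i, y = Real.exp ((ψ n : ℝ) * r ^ ((i:ℤ) - n))} := ⟨m, him, rfl⟩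
    have hle := (hA i).2 hmem
    calc (ψ m:ℝ) * r ^ ((i:ℤ)-m) = Real.log (Real.exp ((ψ m:ℝ) * r ^ ((i:ℤ)-m))) :=
          (Real.log_exp _).symm
      _ ≤ L i := Real.log_le_log (Real.exp_pos _) hle
  have Lpos : ∀ i, (ψ i : ℝ) ≤ L i := by
    intro i
    have := F1 i i le_rfl
    simpa using this
  -- F2 : the max is attained at a "self point"
  have F2 : ∀ i : ℕ, ∃ m : ℕ, i ≤ m ∧ L i = (ψ m : ℝ) * r ^ ((i:ℤ) - m) ∧ L m = (ψ m : ℝ) := by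
    intro i
    obtain ⟨m, him, hEq⟩ := (hA i).1
    have hLi : L i = (ψ m:ℝ) * r ^ ((i:ℤ)-m) := by rw [hL_def]; simp only [hEq, Real.log_exp]
    refine ⟨m, him, hLi, le_antisymm ?_ (Lpos m)⟩
    obtain ⟨m', hm', hEq'⟩ := (hA m).1
    have hLm : L m = (ψ m':ℝ) * r ^ ((m:ℤ)-m') := by rw [hL_def]; simp only [hEq', Real.log_exp]
    have h1 : (ψ m':ℝ) * r ^ ((i:ℤ)-m') ≤ (ψ m:ℝ) * r ^ ((i:ℤ)-m) := hLi ▸ F1 i m' (him.trans hm')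
    have h2 := mul_le_mul_of_nonneg_right h1 (zpow_pos hr0 ((m:ℤ)-i)).le
    have e1 : (ψ m':ℝ) * r ^ ((i:ℤ)-m') * r ^ ((m:ℤ)-i) = (ψ m':ℝ) * r ^ ((m:ℤ)-m') := by
      rw [mul_assoc, ← zpow_add₀ hr0.ne', show (i:ℤ) - m' + ((m:ℤ) - i) = (m:ℤ) - m' by ring]
    have e2 : (ψ m:ℝ) * r ^ ((i:ℤ)-m) * r ^ ((m:ℤ)-i) = (ψ m:ℝ) := by
      rw [mul_assoc, ← zpow_add₀ hr0.ne', show (i:ℤ) - m + ((m:ℤ) - i) = 0 by ring, zpow_zero,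
        mul_one]
    rw [e1, e2] at h2
    rw [hLm]
    exact h2
  -- Part 1 : liminf ≥ 1
  have part1 : (1:EReal) ≤ liminf
      (fun n => (((∑ i ∈ Finset.Icc 1 n, L i) / (ψ n : ℝ) : ℝ) : EReal)) atTop := by
    apply Filter.le_liminf_of_le (by isBoundedDefault)
    filter_upwards [eventually_ge_atTop 1] with n hn
    have hterm : ∀ i ∈ Finset.Icc 1 n, (0:ℝ) ≤ L i := fun i _ =>
      le_trans (le_trans zero_le_one (hψ1 i)) (Lpos i)
    have hsum : (ψ n:ℝ) ≤ ∑ i ∈ Finset.Icc 1 n, L i :=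
      le_trans (Lpos n) (Finset.single_le_sum hterm (Finset.mem_Icc.mpr ⟨hn, le_rfl⟩))
    have h1 : (1:ℝ) ≤ (∑ i ∈ Finset.Icc 1 n, L i) / (ψ n : ℝ) :=
      (one_le_div (hψ0 n)).mpr hsum
    exact_mod_cast h1
  refine ⟨part1, ?_⟩
  -- Part 2 : liminf < ⊤
  set P : ℕ → Prop := fun k => L k = (ψ k : ℝ) with hP_def
  set σ : ℕ → ℝ := fun n => ∑ k ∈ (Finset.Icc 1 n).filter P, (ψ k : ℝ) with hσ_def
  have hσ_nonneg : ∀ n, 0 ≤ σ n := fun n =>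
    Finset.sum_nonneg fun k _ => (hψ0 k).le
  set K : ℝ := 1 / (1 - r⁻¹) with hK_def
  have hrinv : r⁻¹ < 1 := inv_lt_one_of_one_lt₀ hr1
  have hrinv0 : (0:ℝ) ≤ r⁻¹ := inv_nonneg.mpr hr0.le
  have hK0 : 0 < K := by
    rw [hK_def]
    have : 0 < 1 - r⁻¹ := by linarith
    positivity
  -- geometric sum bound
  have hgeom : ∀ k : ℕ, ∑ i ∈ Finset.Icc 1 k, r ^ ((i:ℤ) - k) ≤ K := by
    intro k
    have h1 : ∀ i ∈ Finset.Icc 1 k, r ^ ((i:ℤ)-k) = (r⁻¹) ^ (k - i) := by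
      intro i hi
      rw [Finset.mem_Icc] at hi
      have hc : ((k - i : ℕ) : ℤ) = (k:ℤ) - i := by omega
      rw [inv_pow, ← zpow_natCast r (k - i), hc, ← zpow_neg]
      congr 1
      ring
    rw [Finset.sum_congr rfl h1]
    have h2 : ∑ i ∈ Finset.Icc 1 k, (r⁻¹)^(k-i) ≤ ∑ i ∈ Finset.range (k+1), (r⁻¹)^(k-i) := by
      apply Finset.sum_le_sum_of_subset_of_nonneg
      · intro x hx
        simp only [Finset.mem_Icc, Finset.mem_range] at *
        omega
      · intro i _ _
        positivity
    have h3 : ∑ i ∈ Finset.range (k+1), (r⁻¹)^(k-i) = ∑ i ∈ Finset.range (k+1), (r⁻¹)^i := by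
      have := Finset.sum_range_reflect (fun j => (r⁻¹)^j) (k+1)
      simpa using this
    have h4 : ∑ i ∈ Finset.range (k+1), (r⁻¹)^i ≤ K := by
      have h5 := geom_sum_Ico_le_of_lt_one hrinv0 hrinv (m := 0) (n := k+1)
      have h6 : (r⁻¹)^0 / (1 - r⁻¹) = K := by rw [hK_def]; norm_num
      rw [Finset.range_eq_Ico]
      exact h5.trans_eq h6
    calc ∑ i ∈ Finset.Icc 1 k, (r⁻¹)^(k-i) ≤ ∑ i ∈ Finset.range (k+1), (r⁻¹)^(k-i) := h2
      _ = ∑ i ∈ Finset.range (k+1), (r⁻¹)^i := h3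
      _ ≤ K := h4
  -- key lemma : for self points n, the partial sum is at most K * σ n
  have key : ∀ n : ℕ, P n → (∑ i ∈ Finset.Icc 1 n, L i) ≤ K * σ n := by
    intro n hDn
    have hDn' : L n = (ψ n : ℝ) := by rwa [hP_def] at hDn
    have hstep : ∀ i ∈ Finset.Icc 1 n,
        L i ≤ ∑ k ∈ (Finset.Icc i n).filter P, (ψ k:ℝ) * r ^ ((i:ℤ) - k) := by
      intro i hi
      rw [Finset.mem_Icc] at hi
      obtain ⟨m, him, hLi, hDm⟩ := F2 i
      have hDm' : P m := by rw [hP_def]; exact hDm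
      have nonneg : ∀ k ∈ (Finset.Icc i n).filter P, 0 ≤ (ψ k:ℝ) * r ^ ((i:ℤ)-k) := by
        intro k _
        have := zpow_pos hr0 ((i:ℤ)-k)
        positivity
      by_cases hmn : m ≤ n
      · refine le_trans (le_of_eq hLi) (Finset.single_le_sum nonneg ?_)
        rw [Finset.mem_filter, Finset.mem_Icc]
        exact ⟨⟨him, hmn⟩, hDm'⟩
      · push_neg at hmn
        have hnm : n ≤ m := hmn.le
        have hb : L i ≤ (ψ n:ℝ) * r ^ ((i:ℤ) - n) := by
          have h1 : (ψ m:ℝ) * r ^ ((n:ℤ) - m) ≤ (ψ n:ℝ) := by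
            have h2 := F1 n m hnm
            rwa [hDn'] at h2
          rw [hLi, show (i:ℤ) - m = ((n:ℤ) - m) + ((i:ℤ) - n) by ring, zpow_add₀ hr0.ne',
            ← mul_assoc]
          exact mul_le_mul_of_nonneg_right h1 (zpow_pos hr0 _).le
        refine le_trans hb (Finset.single_le_sum nonneg ?_)
        rw [Finset.mem_filter, Finset.mem_Icc]
        exact ⟨⟨hi.2, le_rfl⟩, hDn⟩
    calc ∑ i ∈ Finset.Icc 1 n, L i
        ≤ ∑ i ∈ Finset.Icc 1 n, ∑ k ∈ (Finset.Icc i n).filter P, (ψ k:ℝ) * r ^ ((i:ℤ)-k) :=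
          Finset.sum_le_sum hstep
      _ = ∑ k ∈ (Finset.Icc 1 n).filter P, ∑ i ∈ Finset.Icc 1 k, (ψ k:ℝ) * r ^ ((i:ℤ)-k) := by
          apply Finset.sum_comm'
          intro x y
          simp only [Finset.mem_Icc, Finset.mem_filter]
          constructor
          · rintro ⟨⟨h1, h2⟩, ⟨⟨h3, h4⟩, h5⟩⟩
            exact ⟨⟨h1, h3⟩, ⟨⟨by omega, h4⟩, h5⟩⟩
          · rintro ⟨⟨h1, h2⟩, ⟨⟨h3, h4⟩, h5⟩⟩
            exact ⟨⟨h1, by omega⟩, ⟨⟨h2, h4⟩, h5⟩⟩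
      _ ≤ ∑ k ∈ (Finset.Icc 1 n).filter P, (ψ k:ℝ) * K := by
          apply Finset.sum_le_sum
          intro k _
          rw [← Finset.mul_sum]
          exact mul_le_mul_of_nonneg_left (hgeom k) (hψ0 k).le
      _ = K * σ n := by
          rw [hσ_def]
          simp only
          rw [← Finset.sum_mul, mul_comm]
  -- dominant point extraction
  set θ : ℝ := (B + 1) / 2 with hθ_def
  have hθ1 : 1 < θ := by rw [hθ_def]; linarith
  have hθB : θ < B := by rw [hθ_def]; linarith
  have hθr : θ < r := by rw [hθ_def, hr_def]; linarith
  have hθ0 : (0:ℝ) < θ := lt_trans one_pos hθ1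
  set c : ℝ := θ - 1 with hc_def
  have hc0 : 0 < c := by rw [hc_def]; linarith
  set a : ℝ := 1 + c⁻¹ with ha_def
  have ha0 : 0 < a := by rw [ha_def]; positivity
  have freq : ∃ᶠ n in atTop, (P n ∧ 1 ≤ n ∧ σ n ≤ a * (ψ n : ℝ)) := by
    by_contra hcon
    rw [not_frequently] at hcon
    obtain ⟨N₀, hN₀⟩ := eventually_atTop.1 hcon
    set N := N₀ + 1 with hN_def
    have hN : ∀ n, N ≤ n → ¬(P n ∧ 1 ≤ n ∧ σ n ≤ a * (ψ n : ℝ)) := fun n hn => hN₀ n (by omega)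
    have grow : ∀ j : ℕ, σ (N + j) ≤ σ N * θ ^ j := by
      intro j
      induction j with
      | zero => simp
      | succ j ih =>
        have hIcc : Finset.Icc 1 (N + j + 1) = insert (N + j + 1) (Finset.Icc 1 (N + j)) :=
          (Finset.insert_Icc_right_eq_Icc_add_one (by omega)).symm
        have hnotmem : (N + j + 1) ∉ (Finset.Icc 1 (N + j)).filter P := by
          simp only [Finset.mem_filter, Finset.mem_Icc]
          omega
        have hpow : σ N * θ ^ j ≤ σ N * θ ^ (j+1) := by
          apply mul_le_mul_of_nonneg_left _ (hσ_nonneg N)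
          apply pow_le_pow_right₀ hθ1.le
          omega
        by_cases hD : P (N + j + 1)
        · have hσs : σ (N + j + 1) = (ψ (N + j + 1):ℝ) + σ (N + j) := by
            rw [hσ_def]
            simp only
            rw [hIcc, Finset.filter_insert, if_pos hD, Finset.sum_insert hnotmem]
          have hnot := hN (N + j + 1) (by omega)
          have h5 : a * (ψ (N+j+1):ℝ) < σ (N+j+1) := by
            by_contra h6
            push_neg at h6
            exact hnot ⟨hD, by omega, h6⟩
          have h7 : c⁻¹ * (ψ (N+j+1):ℝ) < σ (N+j) := by
            rw [hσs, ha_def] at h5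
            nlinarith
          have h8 : (ψ (N+j+1):ℝ) < c * σ (N+j) := by
            have h9 := mul_lt_mul_of_pos_left h7 hc0
            rwa [← mul_assoc, mul_inv_cancel₀ hc0.ne', one_mul] at h9
          have h10 : σ (N+j+1) < θ * σ (N+j) := by
            rw [hσs]
            have he : c * σ (N+j) + σ (N+j) = θ * σ (N+j) := by rw [hc_def]; ring
            linarith
          calc σ (N+j+1) ≤ θ * σ (N+j) := h10.le
            _ ≤ θ * (σ N * θ^j) := mul_le_mul_of_nonneg_left ih hθ0.le
            _ = σ N * θ^(j+1) := by ring
        · have hσs : σ (N + j + 1) = σ (N + j) := by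
            rw [hσ_def]
            simp only
            rw [hIcc, Finset.filter_insert, if_neg hD]
          calc σ (N + j + 1) = σ (N + j) := hσs
            _ ≤ σ N * θ ^ j := ih
            _ ≤ σ N * θ ^ (j+1) := hpow
    set C2 : ℝ := σ N / θ ^ N with hC2_def
    have hC2_0 : 0 ≤ C2 := div_nonneg (hσ_nonneg N) (pow_pos hθ0 N).le
    have hbound : ∀ᶠ i : ℕ in atTop, (ψ i : ℝ) ≤ C2 * θ ^ i := by
      rw [eventually_atTop]
      refine ⟨N, fun i hiN => ?_⟩
      obtain ⟨m, him, hLi, hDm⟩ := F2 i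
      have hDm' : P m := by rw [hP_def]; exact hDm
      have hmN : N ≤ m := le_trans hiN him
      have hm1 : 1 ≤ m := by omega
      have hψm_σ : (ψ m : ℝ) ≤ σ m := by
        rw [hσ_def]
        simp only
        apply Finset.single_le_sum (fun k _ => (hψ0 k).le)
        rw [Finset.mem_filter, Finset.mem_Icc]
        exact ⟨⟨hm1, le_rfl⟩, hDm'⟩
      have hσm : σ m ≤ σ N * θ ^ (m - N) := by
        have := grow (m - N)
        rwa [show N + (m - N) = m by omega] at this
      have hsplit : θ ^ m = θ ^ (m - N) * θ ^ N := by
        rw [← pow_add]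
        congr 1
        omega
      have hpow : σ N * θ ^ (m - N) = C2 * θ ^ m := by
        rw [hC2_def, hsplit]
        field_simp
      have hψm : (ψ m:ℝ) ≤ C2 * θ ^ m := le_trans hψm_σ (le_of_le_of_eq hσm hpow)
      have hzp : (0:ℝ) < r ^ ((i:ℤ) - m) := zpow_pos hr0 _
      have step1 : (ψ i:ℝ) ≤ (C2 * θ ^ m) * r ^ ((i:ℤ)-m) := by
        calc (ψ i:ℝ) ≤ L i := Lpos i
          _ = (ψ m:ℝ) * r ^ ((i:ℤ)-m) := hLi
          _ ≤ (C2 * θ ^ m) * r ^ ((i:ℤ)-m) := mul_le_mul_of_nonneg_right hψm hzp.le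
      have hd : (i:ℤ) - m = -((m - i : ℕ) : ℤ) := by omega
      have step2 : (C2 * θ ^ m) * r ^ ((i:ℤ)-m) ≤ C2 * θ ^ i := by
        rw [hd, zpow_neg, zpow_natCast]
        have hmsplit : θ ^ m = θ ^ i * θ ^ (m - i) := by
          rw [← pow_add]
          congr 1
          omega
        rw [hmsplit]
        have hle1 : θ ^ (m-i) * (r ^ (m-i))⁻¹ ≤ 1 := by
          rw [← div_eq_mul_inv]
          apply div_le_one_of_le₀
          · exact pow_le_pow_left₀ hθ0.le hθr.le _
          · exact (pow_pos hr0 _).le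
        calc C2 * (θ^i * θ^(m-i)) * (r^(m-i))⁻¹ = (C2 * θ^i) * (θ^(m-i) * (r^(m-i))⁻¹) := by ring
          _ ≤ (C2 * θ^i) * 1 := by
              apply mul_le_mul_of_nonneg_left hle1
              positivity
          _ = C2 * θ^i := mul_one _
      exact step1.trans step2
    exact aux_limsup_contra ψ hψ B θ C2 hθ1 hθB h hbound
  -- conclusion
  have freq2 : ∃ᶠ n in atTop,
      (fun n => (((∑ i ∈ Finset.Icc 1 n, L i) / (ψ n : ℝ) : ℝ) : EReal)) n
        ≤ ((K * a : ℝ) : EReal) := by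
    apply freq.mono
    rintro n ⟨hD, hn1, hσn⟩
    have hS : (∑ i ∈ Finset.Icc 1 n, L i) ≤ K * σ n := key n hD
    have hS2 : (∑ i ∈ Finset.Icc 1 n, L i) ≤ K * a * (ψ n:ℝ) := by
      calc (∑ i ∈ Finset.Icc 1 n, L i) ≤ K * σ n := hS
        _ ≤ K * (a * (ψ n : ℝ)) := mul_le_mul_of_nonneg_left hσn hK0.le
        _ = K * a * (ψ n : ℝ) := by ring
    have hdiv : (∑ i ∈ Finset.Icc 1 n, L i) / (ψ n:ℝ) ≤ K * a := by
      rw [div_le_iff₀ (hψ0 n)]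
      exact hS2
    exact EReal.coe_le_coe_iff.mpr hdiv
  have h2 := Filter.liminf_le_of_frequently_le' freq2
  exact lt_of_le_of_lt h2 (EReal.coe_lt_top _)
end
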